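/- Given ε > 0 and β_1,…,β_n ∈ [0,1] with ∑β_k = 1, there exists m ∈ ℕ and pairwise orthogonal projections P_1,…,P_n ∈ M_m(ℂ) summing to the identity such that every diagonal entry of P_k lies within ε of β_k, for each k. -/

import Mathlib

open Matrix Finset

lemma charSum_eq_zero (m : ℕ) (hm : 0 < m) (d : ℤ) (hd : ¬ (m:ℤ) ∣ d) :
    ∑ j ∈ Finset.range m, Complex.exp (2 * Real.pi * Complex.I * d / m) ^ j = 0 := by
  have hm0 : (m:ℂ) ≠ 0 := Nat.cast_ne_zero.2 hm.ne'
  set ζ := Complex.exp (2 * Real.pi * Complex.I * d / m) with hζ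
  have hζm : ζ ^ m = 1 := by
    rw [hζ, ← Complex.exp_nat_mul]
    have : (m:ℂ) * (2 * Real.pi * Complex.I * d / m) = d * (2 * Real.pi * Complex.I) := by
      field_simp
    rw [this, Complex.exp_int_mul_two_pi_mul_I]
  have hζ1 : ζ ≠ 1 := by
    intro h
    rw [hζ, Complex.exp_eq_one_iff] at h
    obtain ⟨k, hk⟩ := h
    apply hd
    refine ⟨k, ?_⟩
    have hπ : (Real.pi : ℂ) ≠ 0 := Complex.ofReal_ne_zero.2 Real.pi_ne_zero
    have : (d : ℂ) = m * k := by
      field_simp at hk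
      have hI := Complex.I_ne_zero
      have h2 : (2 : ℂ) ≠ 0 := two_ne_zero
      apply mul_left_cancel₀ (mul_ne_zero (mul_ne_zero h2 hπ) hI)
      ring_nf
      ring_nf at hk
      linear_combination (2 * (Real.pi:ℂ) * Complex.I) * hk
    exact_mod_cast this
  have := geom_sum_eq hζ1 m
  rw [this, hζm, sub_self, zero_div]

lemma dft_conjTranspose_mul (m : ℕ) (hm : 0 < m) :
    (Matrix.of fun i j : Fin m => Complex.exp (2 * Real.pi * Complex.I * i * j / m))ᴴ *
      (Matrix.of fun i j : Fin m => Complex.exp (2 * Real.pi * Complex.I * i * j / m)) =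
    (m : ℂ) • 1 := by
  ext a b
  rw [Matrix.mul_apply]
  have key : ∀ j : Fin m,
      (Matrix.of fun i j : Fin m => Complex.exp (2 * Real.pi * Complex.I * i * j / m))ᴴ a j *
      (Matrix.of fun i j : Fin m => Complex.exp (2 * Real.pi * Complex.I * i * j / m)) j b
      = Complex.exp (2 * Real.pi * Complex.I * (((b:ℤ) - (a:ℤ)) : ℤ) / m) ^ (j : ℕ) := by
    intro j
    rw [Matrix.conjTranspose_apply, Matrix.of_apply, Matrix.of_apply]
    rw [show (star (Complex.exp (2 * Real.pi * Complex.I * (j:Fin m) * a / m)) : ℂ)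
        = (starRingEnd ℂ) (Complex.exp (2 * Real.pi * Complex.I * (j:Fin m) * a / m)) from rfl]
    rw [← Complex.exp_conj, ← Complex.exp_nat_mul, ← Complex.exp_add]
    congr 1
    have : (starRingEnd ℂ) (2 * Real.pi * Complex.I * ((j:Fin m):ℂ) * ((a:Fin m):ℂ) / m)
        = -(2 * Real.pi * Complex.I * ((j:Fin m):ℂ) * ((a:Fin m):ℂ) / m) := by
      simp [map_div₀, _root_.map_mul, Complex.conj_I, map_ofNat]
      ring
    rw [this]
    push_cast
    field_simp
    ring
  rw [Finset.sum_congr rfl fun j _ => key j, Fin.sum_univ_eq_sum_range]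
  rcases eq_or_ne a b with h | h
  · subst h
    simp [Matrix.one_apply]
  · have hd : ¬ (m:ℤ) ∣ ((b:ℤ) - (a:ℤ)) := by
      intro hdvd
      have hb := b.isLt; have ha := a.isLt
      have h0 : (b:ℤ) - (a:ℤ) = 0 := Int.eq_zero_of_abs_lt_dvd hdvd (by
        rw [abs_sub_lt_iff]; omega)
      exact h (Fin.ext (by omega)).symm
    rw [charSum_eq_zero m hm _ hd]
    simp [Matrix.one_apply, h]

lemma exists_interval (c : ℕ → ℕ) : ∀ (n i : ℕ), c 0 ≤ i → i < c n →
    ∃ k, k < n ∧ c k ≤ i ∧ i < c (k+1) := by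
  intro n
  induction n with
  | zero => intro i h1 h2; omega
  | succ n ih =>
    intro i h1 h2
    by_cases h : c n ≤ i
    · exact ⟨n, Nat.lt_succ_self n, h, h2⟩
    · obtain ⟨k, hk, hk1, hk2⟩ := ih i h1 (by omega)
      exact ⟨k, by omega, hk1, hk2⟩

theorem matrix_constant_diagonal_approx (ε : ℝ) (hε : 0 < ε) (n : ℕ)
    (β : Fin n → ℝ) (hβ : ∀ k, β k ∈ Set.Icc (0 : ℝ) 1) (hβsum : ∑ k, β k = 1) :
    ∃ (m : ℕ), 0 < m ∧ ∃ P : Fin n → Matrix (Fin m) (Fin m) ℂ,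
      (∀ k, (P k)ᴴ = P k ∧ P k * P k = P k) ∧
      (∀ j k, j ≠ k → P j * P k = 0) ∧
      (∑ k, P k = 1) ∧
      (∀ k, ∀ i : Fin m, ‖P k i i - (β k : ℂ)‖ < ε) := by
  classical
  -- the size m
  set m : ℕ := ⌈1/ε⌉₊ + 1 with hm_def
  have hm : 0 < m := Nat.succ_pos _
  have hmR : (0:ℝ) < m := by exact_mod_cast hm
  have hmC : (m:ℂ) ≠ 0 := Nat.cast_ne_zero.2 hm.ne'
  have hmε : 1 / (m:ℝ) < ε := by
    rw [div_lt_iff₀ hmR]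
    have h1 : 1/ε ≤ (⌈1/ε⌉₊ : ℝ) := Nat.le_ceil _
    have h2 : (1:ℝ)/ε < m := by
      rw [hm_def]; push_cast; linarith
    calc (1:ℝ) = ε * (1/ε) := by field_simp
    _ < ε * m := by apply mul_lt_mul_of_pos_left h2 hε
  -- partial sums and cut points
  set bf : ℕ → ℝ := fun j => if h : j < n then β ⟨j, h⟩ else 0 with hbf_def
  have hbf_nonneg : ∀ j, 0 ≤ bf j := by
    intro j; rw [hbf_def]; dsimp only
    split
    · exact (hβ _).1
    · exact le_refl _
  set t : ℕ → ℝ := fun k => ∑ j ∈ Finset.range k, bf j with ht_def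
  have ht_mono : Monotone t := by
    intro a b hab
    exact Finset.sum_le_sum_of_subset_of_nonneg (Finset.range_subset_range.2 hab)
      (fun j _ _ => hbf_nonneg j)
  have ht_nonneg : ∀ k, 0 ≤ t k := fun k => Finset.sum_nonneg fun j _ => hbf_nonneg j
  have ht_succ : ∀ k : Fin n, t ((k:ℕ)+1) = t (k:ℕ) + β k := by
    intro k
    rw [ht_def]; dsimp only
    rw [Finset.sum_range_succ]
    congr 1
    rw [hbf_def]; dsimp only
    rw [dif_pos k.isLt]
  have ht_n : t n = 1 := by
    rw [ht_def]; dsimp only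
    rw [← Fin.sum_univ_eq_sum_range]
    rw [← hβsum]
    apply Finset.sum_congr rfl
    intro k _
    rw [hbf_def]; dsimp only
    rw [dif_pos k.isLt]
  set c : ℕ → ℕ := fun k => (⌊(m:ℝ) * t k⌋).toNat with hc_def
  have hc_cast : ∀ k, (c k : ℝ) = (⌊(m:ℝ) * t k⌋ : ℤ) := by
    intro k
    rw [hc_def]; dsimp only
    exact_mod_cast Int.toNat_of_nonneg (Int.floor_nonneg.2 (mul_nonneg hmR.le (ht_nonneg k)))
  have hc_mono : Monotone c := by
    intro a b hab
    rw [hc_def]; dsimp only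
    exact Int.toNat_le_toNat (Int.floor_le_floor
      (mul_le_mul_of_nonneg_left (ht_mono hab) hmR.le))
  have hc_zero : c 0 = 0 := by
    rw [hc_def]; dsimp only
    rw [ht_def]; simp
  have hc_n : c n = m := by
    rw [hc_def]; dsimp only
    rw [ht_n, mul_one, Int.floor_natCast, Int.toNat_natCast]
  -- DFT matrix
  set V : Matrix (Fin m) (Fin m) ℂ :=
    Matrix.of fun i j : Fin m => Complex.exp (2 * Real.pi * Complex.I * i * j / m) with hV_def
  have hVV : Vᴴ * V = (m : ℂ) • 1 := dft_conjTranspose_mul m hm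
  have hVV' : V * Vᴴ = (m : ℂ) • 1 := by
    have h1 : ((m:ℂ)⁻¹ • Vᴴ) * V = 1 := by
      rw [Matrix.smul_mul, hVV, smul_smul, inv_mul_cancel₀ hmC, one_smul]
    have h2 : V * ((m:ℂ)⁻¹ • Vᴴ) = 1 := mul_eq_one_comm.1 h1
    calc V * Vᴴ = (m:ℂ) • (V * ((m:ℂ)⁻¹ • Vᴴ)) := by
          rw [Matrix.mul_smul, smul_smul, mul_inv_cancel₀ hmC, one_smul]
    _ = (m:ℂ) • 1 := by rw [h2]
  -- diagonal indicator functions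
  set d : Fin n → Fin m → ℂ :=
    fun k i => if c (k:ℕ) ≤ (i:ℕ) ∧ (i:ℕ) < c ((k:ℕ)+1) then 1 else 0 with hd_def
  -- interval disjointness
  have hdisj : ∀ (j k : Fin n), j ≠ k → ∀ i : Fin m, d j i * d k i = 0 := by
    intro j k hjk i
    rw [hd_def]; dsimp only
    split_ifs with h1 h2
    · exfalso
      have hne : (j:ℕ) ≠ (k:ℕ) := fun h => hjk (Fin.ext h)
      rcases lt_or_gt_of_ne hne with h | h
      · have := hc_mono (show (j:ℕ)+1 ≤ (k:ℕ) by omega)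
        omega
      · have := hc_mono (show (k:ℕ)+1 ≤ (j:ℕ) by omega)
        omega
    all_goals simp
  -- generic product formula
  have hmul : ∀ j k : Fin n,
      ((m:ℂ)⁻¹ • (V * Matrix.diagonal (d j) * Vᴴ)) * ((m:ℂ)⁻¹ • (V * Matrix.diagonal (d k) * Vᴴ))
      = (m:ℂ)⁻¹ • (V * Matrix.diagonal (fun i => d j i * d k i) * Vᴴ) := by
    intro j k
    rw [Matrix.smul_mul, Matrix.mul_smul, smul_smul]
    have h1 : (V * Matrix.diagonal (d j) * Vᴴ) * (V * Matrix.diagonal (d k) * Vᴴ)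
        = V * Matrix.diagonal (d j) * ((Vᴴ * V) * (Matrix.diagonal (d k) * Vᴴ)) := by
      simp only [Matrix.mul_assoc]
    rw [h1, hVV, Matrix.smul_mul, one_mul, Matrix.mul_smul, smul_smul]
    rw [show (m:ℂ)⁻¹ * (m:ℂ)⁻¹ * (m:ℂ) = (m:ℂ)⁻¹ by field_simp]
    congr 1
    rw [← Matrix.diagonal_mul_diagonal]
    simp only [Matrix.mul_assoc]
  refine ⟨m, hm, fun k => (m:ℂ)⁻¹ • (V * Matrix.diagonal (d k) * Vᴴ), ?_, ?_, ?_, ?_⟩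
  · -- hermitian projections
    intro k
    constructor
    · have hstar : star (d k) = d k := by
        funext i
        rw [Pi.star_apply, hd_def]
        dsimp only
        split <;> simp
      have hDstar : (Matrix.diagonal (d k))ᴴ = Matrix.diagonal (d k) := by
        rw [Matrix.diagonal_conjTranspose, hstar]
      rw [Matrix.conjTranspose_smul, Matrix.conjTranspose_mul, Matrix.conjTranspose_mul,
        Matrix.conjTranspose_conjTranspose, hDstar]
      congr 1
      · simp
      · simp only [Matrix.mul_assoc]
    · have hidem : (fun i => d k i * d k i) = d k := by
        funext i
        rw [hd_def]; dsimp only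
        split <;> simp
      show _ = (m:ℂ)⁻¹ • (V * Matrix.diagonal (d k) * Vᴴ)
      rw [hmul k k, hidem]
  · -- orthogonality
    intro j k hjk
    rw [hmul j k]
    have : (fun i => d j i * d k i) = fun _ => (0:ℂ) := funext fun i => hdisj j k hjk i
    rw [this, Matrix.diagonal_zero, Matrix.mul_zero, Matrix.zero_mul, smul_zero]
  · -- sum to identity
    have hsum1 : ∀ i : Fin m, (∑ k : Fin n, d k i) = 1 := by
      intro i
      obtain ⟨k0, hk0n, h1, h2⟩ := exists_interval c n i
        (by rw [hc_zero]; exact Nat.zero_le _) (by rw [hc_n]; exact i.isLt)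
      have hk1 : d ⟨k0, hk0n⟩ i = 1 := by
        rw [hd_def]; dsimp only
        rw [if_pos (⟨h1, h2⟩ : c k0 ≤ (i:ℕ) ∧ (i:ℕ) < c (k0+1))]
      rw [Finset.sum_eq_single (⟨k0, hk0n⟩ : Fin n)]
      · exact hk1
      · intro b _ hb
        have h0 := hdisj b ⟨k0, hk0n⟩ hb i
        rw [hk1, mul_one] at h0
        exact h0
      · intro h; exact absurd (Finset.mem_univ _) h
    have hDsum : (∑ k : Fin n, Matrix.diagonal (d k)) = (1 : Matrix (Fin m) (Fin m) ℂ) := by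
      ext a b
      rw [Matrix.sum_apply]
      rcases eq_or_ne a b with rfl | h
      · simp only [Matrix.diagonal_apply_eq, Matrix.one_apply_eq]
        exact hsum1 a
      · simp [Matrix.diagonal_apply_ne _ h, Matrix.one_apply_ne h]
    rw [← Finset.smul_sum, ← Finset.sum_mul, ← Finset.mul_sum, hDsum,
      Matrix.mul_one, hVV', smul_smul, inv_mul_cancel₀ hmC, one_smul]
  · -- diagonal entries
    intro k i
    have hVone : ∀ b : Fin m, V i b * star (V i b) = 1 := by
      intro b
      rw [hV_def]
      dsimp only [Matrix.of_apply]
      rw [show (star (Complex.exp (2 * Real.pi * Complex.I * ((i:ℕ):ℂ) * ((b:ℕ):ℂ) / m)) : ℂ)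
          = (starRingEnd ℂ) (Complex.exp (2 * Real.pi * Complex.I * ((i:ℕ):ℂ) * ((b:ℕ):ℂ) / m)) from rfl]
      rw [← Complex.exp_conj, ← Complex.exp_add]
      have hconj : (starRingEnd ℂ) (2 * Real.pi * Complex.I * ((i:ℕ):ℂ) * ((b:ℕ):ℂ) / m)
          = -(2 * Real.pi * Complex.I * ((i:ℕ):ℂ) * ((b:ℕ):ℂ) / m) := by
        simp [map_div₀, _root_.map_mul, Complex.conj_I, map_ofNat]
        ring
      rw [hconj, add_neg_cancel, Complex.exp_zero]
    have hck1 : c ((k:ℕ)+1) ≤ m := by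
      rw [← hc_n]; exact hc_mono k.isLt
    have hle : c (k:ℕ) ≤ c ((k:ℕ)+1) := hc_mono (Nat.le_succ _)
    have hdiag : ((m:ℂ)⁻¹ • (V * Matrix.diagonal (d k) * Vᴴ)) i i
        = ((c ((k:ℕ)+1) - c (k:ℕ) : ℕ) : ℂ) / m := by
      rw [Matrix.smul_apply, Matrix.mul_apply]
      have hterm : ∀ b : Fin m, (V * Matrix.diagonal (d k)) i b * Vᴴ b i = d k b := by
        intro b
        rw [Matrix.mul_diagonal, Matrix.conjTranspose_apply]
        calc V i b * d k b * star (V i b) = d k b * (V i b * star (V i b)) := by ring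
        _ = d k b := by rw [hVone b, mul_one]
      rw [Finset.sum_congr rfl fun b _ => hterm b]
      have hcount : ∑ b : Fin m, d k b = ((c ((k:ℕ)+1) - c (k:ℕ) : ℕ) : ℂ) := by
        rw [hd_def]; dsimp only
        rw [Fin.sum_univ_eq_sum_range
          (fun j => if c (k:ℕ) ≤ j ∧ j < c ((k:ℕ)+1) then (1:ℂ) else 0) m]
        rw [Finset.sum_boole]
        have hfilter : (Finset.range m).filter (fun j => c (k:ℕ) ≤ j ∧ j < c ((k:ℕ)+1))
            = Finset.Ico (c (k:ℕ)) (c ((k:ℕ)+1)) := by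
          ext j
          simp only [Finset.mem_filter, Finset.mem_range, Finset.mem_Ico]
          omega
        rw [hfilter, Nat.card_Ico]
      rw [hcount, smul_eq_mul, inv_mul_eq_div]
    show ‖((m:ℂ)⁻¹ • (V * Matrix.diagonal (d k) * Vᴴ)) i i - ((β k : ℝ) : ℂ)‖ < ε
    rw [hdiag]
    have hcast : (((c ((k:ℕ)+1) - c (k:ℕ) : ℕ) : ℂ) / (m:ℂ) - ((β k : ℝ) : ℂ))
        = (((((c ((k:ℕ)+1) - c (k:ℕ) : ℕ) : ℝ) / (m:ℝ) - β k) : ℝ) : ℂ) := by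
      push_cast; ring
    rw [hcast, Complex.norm_real, Real.norm_eq_abs]
    -- real estimate
    have hNr : (((c ((k:ℕ)+1) - c (k:ℕ) : ℕ) : ℝ)) = (c ((k:ℕ)+1) : ℝ) - (c (k:ℕ) : ℝ) := by
      rw [Nat.cast_sub hle]
    have hA1 : ((⌊(m:ℝ) * t ((k:ℕ)+1)⌋ : ℤ) : ℝ) ≤ (m:ℝ) * t ((k:ℕ)+1) := Int.floor_le _
    have hA2 : (m:ℝ) * t ((k:ℕ)+1) - 1 < ((⌊(m:ℝ) * t ((k:ℕ)+1)⌋ : ℤ) : ℝ) := Int.sub_one_lt_floor _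
    have hB1 : ((⌊(m:ℝ) * t (k:ℕ)⌋ : ℤ) : ℝ) ≤ (m:ℝ) * t (k:ℕ) := Int.floor_le _
    have hB2 : (m:ℝ) * t (k:ℕ) - 1 < ((⌊(m:ℝ) * t (k:ℕ)⌋ : ℤ) : ℝ) := Int.sub_one_lt_floor _
    have hAB : (m:ℝ) * t ((k:ℕ)+1) - (m:ℝ) * t (k:ℕ) = m * β k := by
      rw [ht_succ k]; ring
    have habs : |(((c ((k:ℕ)+1) - c (k:ℕ) : ℕ) : ℝ)) - (m:ℝ) * β k| < 1 := by
      rw [hNr, hc_cast, hc_cast, abs_lt]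
      constructor <;> linarith
    have hrw : (((c ((k:ℕ)+1) - c (k:ℕ) : ℕ) : ℝ)) / m - β k
        = ((((c ((k:ℕ)+1) - c (k:ℕ) : ℕ) : ℝ)) - (m:ℝ) * β k) / m := by
      field_simp
    rw [hrw, abs_div, abs_of_pos hmR]
    calc |(((c ((k:ℕ)+1) - c (k:ℕ) : ℕ) : ℝ)) - (m:ℝ) * β k| / m < 1 / m := by gcongr
    _ < ε := hmε
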